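/- arXiv:2508.15395 — 3 statements merged into one kernel-verified Lean document; each statement's English description precedes it below -/
import Mathlib

section
/- Let v > 0, x₀, t_q, L_m, L_s be real numbers with L_m ≥ 0, and let T(x_f) = t_q + (x_f − x₀)/v denote the time at which the corridor eVTOL h_k (moving at constant speed v from position x₀ at time t_q) reaches abscissa x_f. Let t̄ : ℝ → ℝ be the function assigning to each abscissa x_f the minimum time for the merging eVTOL to reach the point x_f − L_s with speed matched to v, and assume t̄ satisfies the constant-speed extension property: t̄(x_f') ≤ t̄(x_f) + (x_f' − x_f)/v whenever 0 ≤ x_f ≤ x_f' ≤ L_m. Then there exists a feasible abscissa x_f with 0 ≤ x_f ≤ L_m and T(x_f) ≥ t̄(x_f) if and only if T(L_m) ≥ t̄(L_m). (Abstract form of Proposition 1: the condition T_k^ter ≥ t̄_{ki}^a at the farthest allowable merging point is necessary and sufficient for the merging pair to be valid.) -/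
/-- Abstract form of Proposition 1: the condition `T(L_m) ≥ t̄(L_m)` at the farthest
allowable merging point is necessary and sufficient for the existence of a feasible
merging abscissa `x_f ∈ [0, L_m]` with `T(x_f) ≥ t̄(x_f)`. -/
theorem stmt_1 (v x₀ tq Lm Ls : ℝ) (hv : 0 < v) (hLm : 0 ≤ Lm)
    (T tbar : ℝ → ℝ) (hT : ∀ xf, T xf = tq + (xf - x₀) / v)
    (hext : ∀ xf xf', 0 ≤ xf → xf ≤ xf' → xf' ≤ Lm →
      tbar xf' ≤ tbar xf + (xf' - xf) / v) :
    (∃ xf, 0 ≤ xf ∧ xf ≤ Lm ∧ tbar xf ≤ T xf) ↔ tbar Lm ≤ T Lm := by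
  constructor
  · rintro ⟨xf, hx0, hxL, hle⟩
    have h1 := hext xf Lm hx0 hxL (le_refl Lm)
    have hTL : T Lm = T xf + (Lm - xf) / v := by
      rw [hT, hT]; field_simp; ring
    calc tbar Lm ≤ tbar xf + (Lm - xf) / v := h1
      _ ≤ T xf + (Lm - xf) / v := by linarith
      _ = T Lm := hTL.symm
  · intro h
    exact ⟨Lm, hLm, le_refl _, h⟩
end

section
/- Let m > 0, F > 0, and g, φ, α, β, γ be real numbers. Define c₁ = cos α sin β cos γ + sin α sin γ, c₂ = cos α sin β sin γ − sin α cos γ, c₃ = cos β cos α (the entries of the third column of the Euler rotation matrix R₁(α,β,γ)), and suppose (F/m)·(cos φ · c₂ − sin φ · c₃) = −g·sin φ. Set r = √(1 − (m·g·sin φ / F)²). Then there exists a real angle θ (the tip-path-plane pitch angle) such that c₁ = r·sin θ and sin φ · c₂ + cos φ · c₃ = r·cos θ; consequently the horizontal and vertical acceleration components of the eVTOL in the rotated plane equal (F/m)·r·sin θ and (F/m)·r·cos θ − g·cos φ, respectively, i.e., the six-dimensional dynamics reduce to the planar dynamics v̇^{x′} = (F/m)·√(1 − (m g sin φ/F)²)·sin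 θ, v̇^{z′} = (F/m)·√(1 − (m g sin φ/F)²)·cos θ − g·cos φ. -/
open Real

lemma aux_polar (a b r : ℝ) (hr : 0 ≤ r) (h : a ^ 2 + b ^ 2 = r ^ 2) :
    ∃ θ : ℝ, a = r * sin θ ∧ b = r * cos θ := by
  rcases eq_or_lt_of_le hr with hr0 | hr0
  · refine ⟨0, ?_, ?_⟩ <;>
    · have ha : a = 0 ∧ b = 0 := by
        constructor <;> nlinarith [sq_nonneg a, sq_nonneg b]
      simp [ha.1, ha.2, ← hr0]
  · set z : ℂ := ⟨b, a⟩ with hz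
    have hzabs : ‖z‖ = r := by
      rw [Complex.norm_def, Complex.normSq_mk]
      rw [show b * b + a * a = r ^ 2 by nlinarith]
      exact Real.sqrt_sq hr
    have hzne : z ≠ 0 := by
      intro h0
      rw [h0] at hzabs; simp at hzabs; linarith
    refine ⟨z.arg, ?_, ?_⟩
    · have := Complex.sin_arg z
      rw [hzabs] at this
      field_simp at this
      rw [mul_comm]; simpa [hz] using this.symm
    · have := Complex.cos_arg hzne
      rw [hzabs] at this
      field_simp at this
      rw [mul_comm]; simpa [hz] using this.symm

/-- Under the planar-motion constraint there exists a tip-path-plane pitch angle `θ`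
such that the in-plane thrust direction components are `r·sin θ` and `r·cos θ` with
`r = √(1 − (m·g·sin φ/F)²)`; consequently the six-dimensional dynamics reduce to the
planar dynamics
`v̇^{x′} = (F/m)·√(1 − (m g sin φ/F)²)·sin θ`,
`v̇^{z′} = (F/m)·√(1 − (m g sin φ/F)²)·cos θ − g·cos φ`. -/
theorem stmt_7 (m F g φ α β γ : ℝ) (hm : 0 < m) (hF : 0 < F)
    (c₁ c₂ c₃ : ℝ)
    (hc₁ : c₁ = cos α * sin β * cos γ + sin α * sin γ)
    (hc₂ : c₂ = cos α * sin β * sin γ - sin α * cos γ)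
    (hc₃ : c₃ = cos β * cos α)
    (hplanar : (F / m) * (cos φ * c₂ - sin φ * c₃) = -g * sin φ)
    (r : ℝ) (hr : r = Real.sqrt (1 - (m * g * sin φ / F) ^ 2)) :
    ∃ θ : ℝ,
      c₁ = r * sin θ ∧
      sin φ * c₂ + cos φ * c₃ = r * cos θ ∧
      (F / m) * c₁ = (F / m) * Real.sqrt (1 - (m * g * sin φ / F) ^ 2) * sin θ ∧
      (F / m) * (sin φ * c₂ + cos φ * c₃) - g * cos φ =
        (F / m) * Real.sqrt (1 - (m * g * sin φ / F) ^ 2) * cos θ - g * cos φ := by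
  have hcsum : c₁ ^ 2 + c₂ ^ 2 + c₃ ^ 2 = 1 := by
    have h1 := sin_sq_add_cos_sq α
    have h2 := sin_sq_add_cos_sq β
    have h3 := sin_sq_add_cos_sq γ
    subst hc₁ hc₂ hc₃
    linear_combination (cos α ^ 2 * sin β ^ 2 + sin α ^ 2) * h3 + cos α ^ 2 * h2 + h1
  have hk : cos φ * c₂ - sin φ * c₃ = -(m * g * sin φ / F) := by
    have hFm : F / m ≠ 0 := by positivity
    field_simp at hplanar ⊢
    nlinarith [hplanar]
  have hphi := sin_sq_add_cos_sq φ
  have hsum : c₁ ^ 2 + (sin φ * c₂ + cos φ * c₃) ^ 2 = 1 - (m * g * sin φ / F) ^ 2 := by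
    have : (cos φ * c₂ - sin φ * c₃) ^ 2 = (m * g * sin φ / F) ^ 2 := by
      rw [hk]; ring
    nlinarith
  have hnn : 0 ≤ 1 - (m * g * sin φ / F) ^ 2 := by nlinarith [sq_nonneg c₁, sq_nonneg (sin φ * c₂ + cos φ * c₃)]
  have hr2 : c₁ ^ 2 + (sin φ * c₂ + cos φ * c₃) ^ 2 = r ^ 2 := by
    rw [hr, Real.sq_sqrt hnn]; exact hsum
  have hrnn : 0 ≤ r := hr ▸ Real.sqrt_nonneg _
  obtain ⟨θ, h1, h2⟩ := aux_polar c₁ (sin φ * c₂ + cos φ * c₃) r hrnn hr2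
  exact ⟨θ, h1, h2, by rw [h1, hr]; ring, by rw [h2, hr]; ring⟩
end

section
/- Let L_o, L_m, L_s, x₀, v_lead, v be real numbers with v_lead > 0, v > 0, x₀ < L_m, and suppose the initial separation satisfies x₀ + L_o ≥ L_s and the speed-adjustment rule v ≤ v_lead·(L_m + L_o − L_s)/(L_m − x₀) holds. Let the leader's position be X_lead(t) = x₀ + v_lead·(t − t_e) and the follower's position be X(t) = −L_o + v·(t − t_e). Then for every time t with t_e ≤ t ≤ t_e + (L_m − x₀)/v_lead (i.e., until the leader reaches the endpoint L_m of the TM section), the separation satisfies X_lead(t) − X(t) ≥ L_s. -/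
/-- The one-time speed-adjustment rule at the entrance of the observation zone
guarantees safe separation `X_lead(t) − X(t) ≥ L_s` from the preceding corridor eVTOL
throughout the observation zone and the TM section, i.e. until the leader reaches
the endpoint `L_m` of the TM section. -/
theorem stmt_10 (Lo Lm Ls x₀ vlead v te : ℝ)
    (hvlead : 0 < vlead) (hv : 0 < v) (hx₀ : x₀ < Lm)
    (hsep : Ls ≤ x₀ + Lo)
    (hrule : v ≤ vlead * (Lm + Lo - Ls) / (Lm - x₀))
    (Xlead X : ℝ → ℝ)
    (hXlead : ∀ t, Xlead t = x₀ + vlead * (t - te))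
    (hX : ∀ t, X t = -Lo + v * (t - te)) :
    ∀ t, te ≤ t → t ≤ te + (Lm - x₀) / vlead → Ls ≤ Xlead t - X t := by
  intro t ht1 ht2
  rw [hXlead, hX]
  have hLm : 0 < Lm - x₀ := by linarith
  have hrule' : v * (Lm - x₀) ≤ vlead * (Lm + Lo - Ls) := by
    rw [le_div_iff₀ hLm] at hrule
    · linarith
  have ht2' : vlead * (t - te) ≤ Lm - x₀ := by
    have := (le_div_iff₀ hvlead).mp (by linarith : t - te ≤ (Lm - x₀) / vlead)
    · nlinarith
  have hs : 0 ≤ t - te := by linarith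
  rcases le_or_gt v vlead with h | h
  · nlinarith
  · nlinarith [mul_nonneg hs (le_of_lt (sub_pos.mpr h)), mul_le_mul_of_nonneg_left ht2' (le_of_lt (sub_pos.mpr h))]
end
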